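/- arXiv:1811.08755 — 3 statements merged into one kernel-verified Lean document; each statement's English description precedes it below -/
import Mathlib

section
/- Let q be a complex number and let N, m, k be natural numbers with k ≤ m ≤ N. Then ∑_{l=k}^{N} (-1)^{l-k} · C(N-m+k, l) · C(l, k) · ∏_{j=k+1}^{l} (1 + q/j) = ((-1)^{N-m}/(N-m)!) · ∏_{j=0}^{N-m-1} (q - j), where C(a, b) denotes the binomial coefficient (with C(a, b) = 0 if b > a) and empty products equal 1. (Lemma 3.3 of the paper.) -/
open Finset

/-- The "binomial polynomial" `binom(x, i) = (x)(x-1)⋯(x-i+1)/i!` over ℂ. -/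
noncomputable def Pb (x : ℂ) (i : ℕ) : ℂ :=
  (∏ j ∈ Finset.range i, (x - j)) / (Nat.factorial i : ℂ)

lemma pascalPb (x : ℂ) (n : ℕ) : Pb (x + 1) (n + 1) = Pb x (n + 1) + Pb x n := by
  have h1 : ∏ j ∈ Finset.range (n + 1), (x + 1 - (j : ℂ))
      = (∏ j ∈ Finset.range n, (x - j)) * (x + 1) := by
    rw [Finset.prod_range_succ' (fun j => x + 1 - (j : ℂ)) n]
    congr 1
    · apply Finset.prod_congr rfl
      intro j _
      push_cast
      ring
    · simp
  have h2 : ∏ j ∈ Finset.range (n + 1), (x - (j : ℂ))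
      = (∏ j ∈ Finset.range n, (x - j)) * (x - n) := Finset.prod_range_succ _ _
  have hf : ((n + 1).factorial : ℂ) = ((n : ℂ) + 1) * (n.factorial : ℂ) := by
    push_cast [Nat.factorial_succ]; ring
  have hn0 : (n.factorial : ℂ) ≠ 0 := by exact_mod_cast Nat.factorial_ne_zero n
  have hn1 : ((n : ℂ) + 1) ≠ 0 := Nat.cast_add_one_ne_zero n
  simp only [Pb, h1, h2, hf]
  field_simp
  ring

/-- Chu–Vandermonde with one natural argument. -/
lemma vdmPb (M : ℕ) : ∀ (n : ℕ) (x : ℂ),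
    ∑ i ∈ Finset.range (n + 1), ((Nat.choose M (n - i) : ℕ) : ℂ) * Pb x i
      = Pb (x + M) n := by
  induction M with
  | zero =>
    intro n x
    rw [Finset.sum_eq_single n]
    · simp [Pb]
    · intro i hi _hne
      have hi' : i < n + 1 := Finset.mem_range.mp hi
      rw [Nat.choose_eq_zero_of_lt (by omega : 0 < n - i)]
      simp
    · intro h; exact absurd (Finset.self_mem_range_succ n) h
  | succ M ih =>
    intro n x
    have key : ∀ i ∈ Finset.range (n + 1),
        (((M + 1).choose (n - i) : ℕ) : ℂ) * Pb x i
          = ((M.choose (n - i) : ℕ) : ℂ) * Pb x i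
            + (if i < n then ((M.choose (n - 1 - i) : ℕ) : ℂ) * Pb x i else 0) := by
      intro i hi
      by_cases h : i < n
      · have hni : n - i = (n - 1 - i) + 1 := by omega
        rw [if_pos h, hni, Nat.choose_succ_succ]
        push_cast
        ring
      · have hi'' : i < n + 1 := Finset.mem_range.mp hi
        have : i = n := by omega
        subst this
        simp
    rw [Finset.sum_congr rfl key, Finset.sum_add_distrib, ih n x]
    rcases n with _ | n'
    · simp [Pb]
    · have h2 : ∑ i ∈ Finset.range (n' + 1 + 1),
          (if i < n' + 1 then ((M.choose (n' + 1 - 1 - i) : ℕ) : ℂ) * Pb x i else 0)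
          = ∑ i ∈ Finset.range (n' + 1), ((M.choose (n' - i) : ℕ) : ℂ) * Pb x i := by
        rw [Finset.sum_range_succ, if_neg (lt_irrefl _), add_zero]
        apply Finset.sum_congr rfl
        intro i hi
        rw [if_pos (Finset.mem_range.mp hi)]
        have : n' + 1 - 1 - i = n' - i := by omega
        rw [this]
      rw [h2, ih n' x]
      push_cast
      rw [show x + ((M : ℂ) + 1) = (x + (M : ℂ)) + 1 by ring, pascalPb]

/-- product formula: `k! * ∏_{j<i} (k+1+j) = (k+i)!` in ℂ. -/
lemma factProd (k : ℕ) : ∀ i : ℕ,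
    (Nat.factorial k : ℂ) * ∏ j ∈ Finset.range i, ((k : ℂ) + 1 + j)
      = (Nat.factorial (k + i) : ℂ) := by
  intro i
  induction i with
  | zero => simp
  | succ i ih =>
    rw [Finset.prod_range_succ, ← mul_assoc, ih]
    have : (k + (i + 1)).factorial = (k + i).factorial * (k + i + 1) := by
      rw [show k + (i + 1) = (k + i) + 1 by ring, Nat.factorial_succ]
      ring
    rw [this]
    push_cast
    ring

/-- **Lemma 3.3.** For `k ≤ m ≤ N` and `q ∈ ℂ`,
`∑_{l=k}^{N} (-1)^{l-k} C(N-m+k, l) C(l, k) ∏_{j=k+1}^{l} (1 + q/j)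
  = ((-1)^{N-m}/(N-m)!) ∏_{j=0}^{N-m-1} (q - j)`. -/
theorem stmt0 (q : ℂ) (N m k : ℕ) (hk : k ≤ m) (hm : m ≤ N) :
    ∑ l ∈ Finset.Icc k N, (-1 : ℂ) ^ (l - k) * (Nat.choose (N - m + k) l : ℂ) *
        (Nat.choose l k : ℂ) * ∏ j ∈ Finset.Icc (k + 1) l, (1 + q / (j : ℂ))
      = ((-1 : ℂ) ^ (N - m) / (Nat.factorial (N - m) : ℂ)) *
        ∏ j ∈ Finset.range (N - m), (q - (j : ℂ)) := by
  set n := N - m with hn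
  have hnk : n + k ≤ N := by omega
  -- restrict the sum to Icc k (n+k)
  have hsub : Finset.Icc k (n + k) ⊆ Finset.Icc k N := by
    apply Finset.Icc_subset_Icc_right hnk
  have hstep1 : ∑ l ∈ Finset.Icc k N, (-1 : ℂ) ^ (l - k) * (Nat.choose (N - m + k) l : ℂ) *
        (Nat.choose l k : ℂ) * ∏ j ∈ Finset.Icc (k + 1) l, (1 + q / (j : ℂ))
      = ∑ l ∈ Finset.Icc k (n + k), (-1 : ℂ) ^ (l - k) * (Nat.choose (n + k) l : ℂ) *
        (Nat.choose l k : ℂ) * ∏ j ∈ Finset.Icc (k + 1) l, (1 + q / (j : ℂ)) := by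
    rw [← hn]
    refine (Finset.sum_subset hsub ?_).symm
    intro l hl hnl
    have h1 : l ∈ Finset.Icc k N := hl
    have : n + k < l := by
      simp only [Finset.mem_Icc] at h1 hnl
      omega
    rw [Nat.choose_eq_zero_of_lt this]
    simp
  rw [hstep1]
  -- reindex: l = k + i, i ∈ range (n+1)
  have hstep2 : ∑ l ∈ Finset.Icc k (n + k), (-1 : ℂ) ^ (l - k) * (Nat.choose (n + k) l : ℂ) *
        (Nat.choose l k : ℂ) * ∏ j ∈ Finset.Icc (k + 1) l, (1 + q / (j : ℂ))
      = ∑ i ∈ Finset.range (n + 1), (-1 : ℂ) ^ i * (Nat.choose (n + k) (k + i) : ℂ) *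
        (Nat.choose (k + i) k : ℂ) * ∏ j ∈ Finset.Icc (k + 1) (k + i), (1 + q / (j : ℂ)) := by
    rw [← Finset.Ico_add_one_right_eq_Icc, Finset.sum_Ico_eq_sum_range]
    have : n + k + 1 - k = n + 1 := by omega
    rw [this]
    apply Finset.sum_congr rfl
    intro i _
    have : k + i - k = i := by omega
    rw [this]
  rw [hstep2]
  -- per-term rewriting into Vandermonde form
  have hstep3 : ∀ i ∈ Finset.range (n + 1),
      (-1 : ℂ) ^ i * (Nat.choose (n + k) (k + i) : ℂ) *
        (Nat.choose (k + i) k : ℂ) * ∏ j ∈ Finset.Icc (k + 1) (k + i), (1 + q / (j : ℂ))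
      = ((Nat.choose (n + k) (n - i) : ℕ) : ℂ) * Pb (-q - k - 1) i := by
    intro i hi
    have hi' : i ≤ n := by have := Finset.mem_range.mp hi; omega
    -- rewrite interval product as range product
    have hprod : ∏ j ∈ Finset.Icc (k + 1) (k + i), (1 + q / (j : ℂ))
        = ∏ j ∈ Finset.range i, (1 + q / ((k : ℂ) + 1 + j)) := by
      rw [← Finset.Ico_add_one_right_eq_Icc, Finset.prod_Ico_eq_prod_range]
      have : k + i + 1 - (k + 1) = i := by omega
      rw [this]
      apply Finset.prod_congr rfl
      intro j _
      push_cast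
      ring_nf
    rw [hprod]
    have hden : ∀ j ∈ Finset.range i, ((k : ℂ) + 1 + j) ≠ 0 := by
      intro j _
      have h0 : ((k + 1 + j : ℕ) : ℂ) ≠ 0 := Nat.cast_ne_zero.mpr (by omega)
      push_cast at h0
      exact h0
    have hsplit : ∏ j ∈ Finset.range i, (1 + q / ((k : ℂ) + 1 + j))
        = (∏ j ∈ Finset.range i, (q + ((k : ℂ) + 1 + j))) /
          (∏ j ∈ Finset.range i, ((k : ℂ) + 1 + j)) := by
      rw [← Finset.prod_div_distrib]
      apply Finset.prod_congr rfl
      intro j hj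
      have hc := hden j hj
      field_simp
      ring
    rw [hsplit]
    -- Pb (-q-k-1) i = (-1)^i * ∏ (q + k + 1 + j) / i!
    have hPb : Pb (-q - (k : ℂ) - 1) i
        = (-1 : ℂ) ^ i * (∏ j ∈ Finset.range i, (q + ((k : ℂ) + 1 + j))) /
          (Nat.factorial i : ℂ) := by
      unfold Pb
      rw [show ∏ j ∈ Finset.range i, (-q - (k : ℂ) - 1 - j)
          = ∏ j ∈ Finset.range i, (-1 : ℂ) * (q + ((k : ℂ) + 1 + j)) by
        apply Finset.prod_congr rfl; intro j _; ring]
      rw [Finset.prod_mul_distrib, Finset.prod_const, Finset.card_range]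
    -- choices
    have hcs : Nat.choose (n + k) (k + i) = Nat.choose (n + k) (n - i) := by
      rw [← Nat.choose_symm (by omega : k + i ≤ n + k)]
      congr 1
      omega
    have hfac : ∏ j ∈ Finset.range i, ((k : ℂ) + 1 + j)
        = (Nat.factorial (k + i) : ℂ) / (Nat.factorial k : ℂ) := by
      have := factProd k i
      have hk0 : (Nat.factorial k : ℂ) ≠ 0 := by exact_mod_cast Nat.factorial_ne_zero k
      field_simp at this ⊢
      linear_combination this
    have hk0 : (Nat.factorial k : ℂ) ≠ 0 := by exact_mod_cast Nat.factorial_ne_zero k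
    have hi0 : (Nat.factorial i : ℂ) ≠ 0 := by exact_mod_cast Nat.factorial_ne_zero i
    have hki0 : (Nat.factorial (k + i) : ℂ) ≠ 0 := by
      exact_mod_cast Nat.factorial_ne_zero (k + i)
    have hchooseN : (k + i).choose k * k.factorial * i.factorial = (k + i).factorial := by
      have h := Nat.choose_mul_factorial_mul_factorial (Nat.le_add_right k i)
      simpa [Nat.add_sub_cancel_left] using h
    have hchooseC : (Nat.choose (k + i) k : ℂ)
        = (Nat.factorial (k + i) : ℂ) / ((Nat.factorial k : ℂ) * (Nat.factorial i : ℂ)) := by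
      rw [eq_div_iff (mul_ne_zero hk0 hi0), ← mul_assoc]
      exact_mod_cast hchooseN
    rw [hcs, hPb, hfac, hchooseC]
    field_simp
  rw [Finset.sum_congr rfl hstep3, vdmPb (n + k) n (-q - k - 1)]
  -- final simplification
  have harg : -q - (k : ℂ) - 1 + ((n + k : ℕ) : ℂ) = ((n : ℂ) - 1 - q) := by
    push_cast; ring
  rw [harg]
  unfold Pb
  rw [show ∏ j ∈ Finset.range n, ((n : ℂ) - 1 - q - j)
      = ∏ j ∈ Finset.range n, (-1 : ℂ) * (q - ((n : ℂ) - 1 - j)) by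
    apply Finset.prod_congr rfl; intro j _; ring]
  rw [Finset.prod_mul_distrib, Finset.prod_const]
  rw [show ∏ j ∈ Finset.range n, (q - ((n : ℂ) - 1 - j))
      = ∏ j ∈ Finset.range n, (q - ((n - 1 - j : ℕ) : ℂ)) by
    apply Finset.prod_congr rfl; intro j hj
    congr 1
    have hj' : j < n := Finset.mem_range.mp hj
    push_cast [Nat.cast_sub (by omega : j ≤ n - 1), Nat.cast_sub (by omega : 1 ≤ n)]
    ring]
  rw [Finset.prod_range_reflect (fun j => (q - (j : ℂ))) n, Finset.card_range]
  ring
end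

section
/- Let κ ∈ ℂ with κ ≠ 1, and let N, m, k be natural numbers with k ≤ m ≤ N. Then ∑_{l=k}^{N} (-1)^{l-k} · C(N-m+k, l) · C(l, k) · ∏_{j=k+1}^{l} ((j(κ-1)+1)/(j(κ-1))) = ∏_{j=1}^{N-m} ((j(κ-1)-κ)/(j(κ-1))). (This is Lemma 3.3 of the paper specialized at q = 1/(κ-1), in the form in which it is applied in the proof of Lemma 3.4.) -/
open Finset

-- nat product identity: k! * ∏_{j=1}^n (k+j) = (k+n)!
lemma natprod (k : ℕ) : ∀ n : ℕ, Nat.factorial k * ∏ j ∈ Icc 1 n, (k + j) = Nat.factorial (k + n)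
  | 0 => by simp
  | n + 1 => by
    rw [prod_Icc_succ_top (by omega), ← Nat.mul_assoc, natprod k n]
    rw [show k + (n+1) = (k+n) + 1 by ring, Nat.factorial_succ]
    ring

lemma natchoose (k n : ℕ) : (n + k).choose k * ∏ j ∈ Icc 1 n, j = ∏ j ∈ Icc 1 n, (k + j) := by
  have h0 : Nat.factorial k * ((n + k).choose k * ∏ j ∈ Icc 1 n, j)
      = Nat.factorial k * ∏ j ∈ Icc 1 n, (k + j) := by
    have hfac : ∏ j ∈ Icc 1 n, j = Nat.factorial n := by
      have := natprod 0 n; simpa using this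
    rw [natprod, hfac]
    have := Nat.choose_mul_factorial_mul_factorial (Nat.le_add_left k n)
    rw [Nat.add_sub_cancel] at this
    rw [show k + n = n + k by ring, ← this]; ring
  exact Nat.eq_of_mul_eq_mul_left (Nat.factorial_pos k) h0

-- shift identity for the denominator products
lemma prodshift (k : ℕ) : ∀ n : ℕ, ((k : ℂ) + 1) * ∏ j ∈ Icc 1 n, ((k : ℂ) + 1 + (j : ℂ))
    = ((k : ℂ) + (n : ℂ) + 1) * ∏ j ∈ Icc 1 n, ((k : ℂ) + (j : ℂ))
  | 0 => by simp
  | n + 1 => by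
    rw [prod_Icc_succ_top (by omega : 1 ≤ n + 1), prod_Icc_succ_top (by omega : 1 ≤ n + 1),
      ← mul_assoc, prodshift k n]
    push_cast
    ring

-- the key Chu–Vandermonde type identity
lemma key (x : ℂ) : ∀ (n k : ℕ),
    ∑ i ∈ range (n + 1), (-1 : ℂ) ^ i * (Nat.choose n i : ℂ) *
        ∏ j ∈ Icc 1 i, ((x + (k : ℂ) + (j : ℂ)) / ((k : ℂ) + (j : ℂ)))
      = ∏ j ∈ Icc 1 n, (((j : ℂ) - 1 - x) / ((k : ℂ) + (j : ℂ)))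
  | 0, k => by simp
  | n + 1, k => by
    set P : ℕ → ℂ := fun i => ∏ j ∈ Icc 1 i, ((x + (k : ℂ) + (j : ℂ)) / ((k : ℂ) + (j : ℂ)))
      with hP
    show ∑ i ∈ range (n + 1 + 1), (-1 : ℂ) ^ i * (Nat.choose (n+1) i : ℂ) * P i
      = ∏ j ∈ Icc 1 (n+1), (((j : ℂ) - 1 - x) / ((k : ℂ) + (j : ℂ)))
    have hsplit : ∑ i ∈ range (n + 1 + 1), (-1 : ℂ) ^ i * (Nat.choose (n+1) i : ℂ) * P i
        = (∑ i ∈ range (n + 1 + 1), (-1 : ℂ) ^ i * (Nat.choose n i : ℂ) * P i)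
          + ∑ i ∈ range (n + 1), (-1 : ℂ) ^ (i+1) * (Nat.choose n i : ℂ) * P (i+1) := by
      rw [Finset.sum_range_succ' (fun i => (-1 : ℂ) ^ i * (Nat.choose (n+1) i : ℂ) * P i) (n+1),
        Finset.sum_range_succ' (fun i => (-1 : ℂ) ^ i * (Nat.choose n i : ℂ) * P i) (n+1)]
      have hc : ∀ i ∈ range (n+1),
          (-1 : ℂ) ^ (i+1) * (Nat.choose (n+1) (i+1) : ℂ) * P (i+1)
          = (-1 : ℂ) ^ (i+1) * (Nat.choose n (i+1) : ℂ) * P (i+1)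
            + (-1 : ℂ) ^ (i+1) * (Nat.choose n i : ℂ) * P (i+1) := by
        intro i _
        have : ((n+1).choose (i+1) : ℂ) = (n.choose (i+1) : ℂ) + (n.choose i : ℂ) := by
          rw [Nat.choose_succ_succ]; push_cast; ring
        rw [this]; ring
      rw [Finset.sum_congr rfl hc, Finset.sum_add_distrib]
      simp only [Nat.choose_zero_right]
      ring
    have h1 : ∑ i ∈ range (n + 1 + 1), (-1 : ℂ) ^ i * (Nat.choose n i : ℂ) * P i
        = ∏ j ∈ Icc 1 n, (((j : ℂ) - 1 - x) / ((k : ℂ) + (j : ℂ))) := by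
      rw [Finset.sum_range_succ]
      simp only [Nat.choose_succ_self, Nat.cast_zero, mul_zero, zero_mul, add_zero]
      exact key x n k
    have hPfac : ∀ i : ℕ, P (i+1) = ((x + (k : ℂ) + 1) / ((k : ℂ) + 1)) *
        ∏ j ∈ Icc 1 i, ((x + ((k+1 : ℕ) : ℂ) + (j : ℂ)) / (((k+1 : ℕ) : ℂ) + (j : ℂ))) := by
      intro i
      rw [hP]
      simp only
      rw [← Finset.Ico_add_one_right_eq_Icc 1 (i+1),
        Finset.prod_eq_prod_Ico_succ_bot (by omega : 1 < i + 1 + 1)]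
      congr 1
      · push_cast; ring_nf
      · rw [Finset.prod_Ico_eq_prod_range, ← Finset.Ico_add_one_right_eq_Icc 1 i,
          Finset.prod_Ico_eq_prod_range]
        simp only [show i + 1 + 1 - (1+1) = i from by omega, show i + 1 - 1 = i from by omega]
        apply Finset.prod_congr rfl
        intro j _
        push_cast; ring_nf
    have h2 : ∑ i ∈ range (n + 1), (-1 : ℂ) ^ (i+1) * (Nat.choose n i : ℂ) * P (i+1)
        = (-((x + (k : ℂ) + 1) / ((k : ℂ) + 1))) *
          ∏ j ∈ Icc 1 n, (((j : ℂ) - 1 - x) / (((k+1 : ℕ) : ℂ) + (j : ℂ))) := by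
      rw [← key x n (k+1), Finset.mul_sum]
      apply Finset.sum_congr rfl
      intro i _
      rw [hPfac i]
      ring
    rw [hsplit, h1, h2]
    -- final algebraic step
    have hk1 : ((k : ℂ) + 1) ≠ 0 := by
      have h : (((k+1 : ℕ)) : ℂ) ≠ 0 := Nat.cast_ne_zero.mpr (by omega)
      push_cast at h; exact h
    have hkn1 : ((k : ℂ) + (n : ℂ) + 1) ≠ 0 := by
      have h : (((k+n+1 : ℕ)) : ℂ) ≠ 0 := Nat.cast_ne_zero.mpr (by omega)
      push_cast at h; exact h
    have hDk : (∏ j ∈ Icc 1 n, ((k : ℂ) + (j : ℂ))) ≠ 0 := by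
      apply Finset.prod_ne_zero_iff.mpr
      intro j hj
      have hj1 := (Finset.mem_Icc.mp hj).1
      have h : (((k+j : ℕ)) : ℂ) ≠ 0 := Nat.cast_ne_zero.mpr (by omega)
      push_cast at h; exact h
    have hDk1 : (∏ j ∈ Icc 1 n, ((k : ℂ) + 1 + (j : ℂ))) ≠ 0 := by
      apply Finset.prod_ne_zero_iff.mpr
      intro j _
      have h : (((k+1+j : ℕ)) : ℂ) ≠ 0 := Nat.cast_ne_zero.mpr (by omega)
      push_cast at h; exact h
    rw [prod_Icc_succ_top (by omega : 1 ≤ n + 1)]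
    push_cast
    rw [Finset.prod_div_distrib, Finset.prod_div_distrib]
    have hsh : ∏ j ∈ Icc 1 n, ((k : ℂ) + 1 + (j : ℂ))
        = ((k : ℂ) + (n : ℂ) + 1) * (∏ j ∈ Icc 1 n, ((k : ℂ) + (j : ℂ))) / ((k : ℂ) + 1) := by
      rw [eq_div_iff hk1]
      linear_combination prodshift k n
    rw [hsh]
    have e : (k:ℂ) + ((n:ℂ) + 1) = (k:ℂ) + (n:ℂ) + 1 := by ring
    rw [e]
    field_simp
    ring

/-- **Lemma 3.3 specialized at `q = 1/(κ-1)`** (as used in the proof of Lemma 3.4).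
For `κ ≠ 1` and `k ≤ m ≤ N`,
`∑_{l=k}^{N} (-1)^{l-k} C(N-m+k, l) C(l, k) ∏_{j=k+1}^{l} ((j(κ-1)+1)/(j(κ-1)))
  = ∏_{j=1}^{N-m} ((j(κ-1)-κ)/(j(κ-1)))`. -/
theorem stmt1 (κ : ℂ) (hκ : κ ≠ 1) (N m k : ℕ) (hk : k ≤ m) (hm : m ≤ N) :
    ∑ l ∈ Finset.Icc k N, (-1 : ℂ) ^ (l - k) * (Nat.choose (N - m + k) l : ℂ) *
        (Nat.choose l k : ℂ) *
        ∏ j ∈ Finset.Icc (k + 1) l, (((j : ℂ) * (κ - 1) + 1) / ((j : ℂ) * (κ - 1)))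
      = ∏ j ∈ Finset.Icc 1 (N - m), (((j : ℂ) * (κ - 1) - κ) / ((j : ℂ) * (κ - 1))) := by
  have hc : κ - 1 ≠ 0 := sub_ne_zero.mpr hκ
  set n := N - m with hn
  set x : ℂ := (κ - 1)⁻¹ with hx
  set f : ℕ → ℂ := fun l => (-1 : ℂ) ^ (l - k) * (Nat.choose (n + k) l : ℂ) *
      (Nat.choose l k : ℂ) *
      ∏ j ∈ Finset.Icc (k + 1) l, (((j : ℂ) * (κ - 1) + 1) / ((j : ℂ) * (κ - 1))) with hf
  show ∑ l ∈ Finset.Icc k N, f l = _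
  -- restrict the sum
  have hnkN : n + k ≤ N := by omega
  have hstep1 : ∑ l ∈ Finset.Icc k N, f l = ∑ l ∈ Finset.Icc k (n + k), f l := by
    refine (Finset.sum_subset (Finset.Icc_subset_Icc_right hnkN) ?_).symm
    intro l hl hl2
    have h1 : n + k < l := by
      simp only [Finset.mem_Icc] at hl hl2; omega
    rw [hf]
    simp only
    rw [Nat.choose_eq_zero_of_lt h1]
    push_cast; ring
  -- reindex
  have hstep2 : ∑ l ∈ Finset.Icc k (n + k), f l = ∑ i ∈ range (n + 1), f (k + i) := by
    rw [← Finset.Ico_add_one_right_eq_Icc, Finset.sum_Ico_eq_sum_range]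
    simp only [show n + k + 1 - k = n + 1 from by omega]
  -- pointwise transform
  have hpt : ∀ i ∈ range (n + 1), f (k + i)
      = ((Nat.choose (n + k) k : ℂ)) * ((-1 : ℂ) ^ i * (Nat.choose n i : ℂ) *
        ∏ j ∈ Icc 1 i, ((x + (k : ℂ) + (j : ℂ)) / ((k : ℂ) + (j : ℂ)))) := by
    intro i hi
    have hin : i ≤ n := by simp only [Finset.mem_range] at hi; omega
    rw [hf]
    simp only
    have hch : ((n + k).choose (k + i) : ℂ) * ((k + i).choose k : ℂ)
        = ((n + k).choose k : ℂ) * ((n).choose i : ℂ) := by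
      have := Nat.choose_mul (n := n + k) (k := k + i) (s := k) (by omega)
      rw [show n + k - k = n from by omega, show k + i - k = i from by omega] at this
      exact_mod_cast congrArg (Nat.cast : ℕ → ℂ) this
    have hsub : k + i - k = i := by omega
    have hprod : ∏ j ∈ Finset.Icc (k + 1) (k + i), (((j : ℂ) * (κ - 1) + 1) / ((j : ℂ) * (κ - 1)))
        = ∏ j ∈ Icc 1 i, ((x + (k : ℂ) + (j : ℂ)) / ((k : ℂ) + (j : ℂ))) := by
      rw [← Finset.Ico_add_one_right_eq_Icc (k+1), Finset.prod_Ico_eq_prod_range,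
        ← Finset.Ico_add_one_right_eq_Icc 1, Finset.prod_Ico_eq_prod_range]
      simp only [show k + i + 1 - (k + 1) = i from by omega, show i + 1 - 1 = i from by omega]
      apply Finset.prod_congr rfl
      intro j _
      have hm0 : ((k + 1 + j : ℕ) : ℂ) ≠ 0 := Nat.cast_ne_zero.mpr (by omega)
      push_cast at hm0 ⊢
      have hm2 : (k : ℂ) + (1 + (j : ℂ)) ≠ 0 := by
        intro h0; exact hm0 (by linear_combination h0)
      rw [hx]
      field_simp
      ring
    rw [hsub, hprod]
    linear_combination ((-1 : ℂ) ^ i *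
      (∏ j ∈ Icc 1 i, ((x + (k : ℂ) + (j : ℂ)) / ((k : ℂ) + (j : ℂ))))) * hch
  rw [hstep1, hstep2, Finset.sum_congr rfl hpt, ← Finset.mul_sum, key x n k]
  -- final: binomial absorbs shifted denominators, and RHS matches
  have hRHS : ∏ j ∈ Finset.Icc 1 n, (((j : ℂ) * (κ - 1) - κ) / ((j : ℂ) * (κ - 1)))
      = (∏ j ∈ Icc 1 n, ((j : ℂ) - 1 - x)) / (∏ j ∈ Icc 1 n, (j : ℂ)) := by
    rw [← Finset.prod_div_distrib]
    apply Finset.prod_congr rfl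
    intro j hj
    have hj1 := (Finset.mem_Icc.mp hj).1
    have hj0 : ((j : ℕ) : ℂ) ≠ 0 := Nat.cast_ne_zero.mpr (by omega)
    rw [hx, div_eq_div_iff (mul_ne_zero hj0 hc) hj0]
    field_simp
    ring
  rw [hRHS]
  -- cast of natchoose
  have hcast : ((n + k).choose k : ℂ) * (∏ j ∈ Icc 1 n, (j : ℂ))
      = ∏ j ∈ Icc 1 n, ((k : ℂ) + (j : ℂ)) := by
    have := natchoose k n
    have h2 := congrArg (Nat.cast : ℕ → ℂ) this
    push_cast at h2
    exact h2
  have hDn : (∏ j ∈ Icc 1 n, (j : ℂ)) ≠ 0 := by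
    apply Finset.prod_ne_zero_iff.mpr
    intro j hj
    exact Nat.cast_ne_zero.mpr (by have := (Finset.mem_Icc.mp hj).1; omega)
  have hC : ((n + k).choose k : ℂ) ≠ 0 :=
    Nat.cast_ne_zero.mpr (Nat.choose_pos (by omega)).ne'
  rw [Finset.prod_div_distrib, ← hcast]
  field_simp
end

section
/- Let R be a (possibly noncommutative) ring, X_0, X_1, …, X_N ∈ R, and let l, m be natural numbers with 0 ≤ l ≤ N and 1 ≤ m ≤ N. Then ∑_{S} e_m(X_0, …, X_0 (l copies), X_{i_1}, …, X_{i_{N-l}}) = ∑_{k=0}^{min(l,m)} C(l, k) · C(N-m+k, l) · e_{m-k}(X_1, …, X_N) · X_0^k, where the outer sum on the left runs over all subsets S = {i_1 < i_2 < … < i_{N-l}} of {1, …, N} of size N - l, and e_m is applied to the list of length N whose first l entries are X_0 and whose remaining entries are X_{i_1}, …, X_{i_{N-l}} in increasing order of index. (This is the key counting identity established in the proof of Lemma 3.4 of the paper.) -/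
/-- The `m`-th noncommutative elementary symmetric polynomial of the list
`[X_1, …, X_n]`: the sum over `n ≥ i_1 > i_2 > … > i_m ≥ 1` of
`X_{i_1} X_{i_2} ⋯ X_{i_m}` (factors in strictly decreasing order of index),
with `e_0 = 1`. -/
def ncE {R : Type*} [Ring R] : ℕ → List R → R
  | 0, _ => 1
  | _ + 1, [] => 0
  | m + 1, x :: xs => ncE (m + 1) xs + ncE m xs * x

section Aux

variable {R : Type*} [Ring R]

theorem ncE_zero (L : List R) : ncE 0 L = 1 := by cases L <;> rfl

theorem ncE_succ_nil (m : ℕ) : ncE (m + 1) ([] : List R) = 0 := rfl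

theorem ncE_succ_cons (m : ℕ) (x : R) (xs : List R) :
    ncE (m + 1) (x :: xs) = ncE (m + 1) xs + ncE m xs * x := rfl

theorem ncE_eq_zero : ∀ (m : ℕ) (L : List R), L.length < m → ncE m L = 0
  | 0, _, h => absurd h (Nat.not_lt_zero _)
  | _ + 1, [], _ => rfl
  | m + 1, x :: L, h => by
    have h1 : L.length < m + 1 := by simp at h; omega
    have h2 : L.length < m := by simp at h; omega
    rw [ncE_succ_cons]
    rcases m with _ | m
    · omega
    · rw [ncE_eq_zero (m + 1 + 1) L h1, ncE_eq_zero (m + 1) L h2, zero_mul, add_zero]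

/-- mapping commutes with sublistsLen -/
theorem sublistsLen_map_map {α β : Type*} (f : α → β) :
    ∀ (c : ℕ) (L : List α),
      List.sublistsLen c (L.map f) = (List.sublistsLen c L).map (List.map f)
  | 0, L => by simp
  | c + 1, [] => by simp
  | c + 1, x :: L => by
    rw [List.map_cons, List.sublistsLen_succ_cons, List.sublistsLen_succ_cons,
      List.map_append, sublistsLen_map_map f (c + 1) L, sublistsLen_map_map f c L,
      List.map_map, List.map_map]
    congr 1

/-- key counting lemma: summing `ncE j` over all sublists of length `j + d`. -/
theorem key_s3 (L : List R) : ∀ (j d : ℕ),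
    ((List.sublistsLen (j + d) L).map (ncE j)).sum
      = ((L.length - j).choose d) • ncE j L := by
  induction L with
  | nil =>
    intro j d
    rcases j with _ | j
    · rcases d with _ | d
      · simp [ncE_zero]
      · simp [ncE_zero]
    · have : j + 1 + d = (j + d) + 1 := by omega
      rw [this, List.sublistsLen_succ_nil]
      simp [ncE_succ_nil]
  | cons x L ih =>
    intro j d
    rcases j with _ | j
    · -- j = 0 : counting
      have hmap : (List.sublistsLen (0 + d) (x :: L)).map (ncE (0 : ℕ)) =
          List.replicate ((List.sublistsLen (0 + d) (x :: L)).length) (1 : R) := by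
        rw [List.eq_replicate_iff]
        refine ⟨by simp, ?_⟩
        intro b hb
        rcases List.mem_map.1 hb with ⟨T, _, rfl⟩
        exact ncE_zero T
      rw [hmap, List.sum_replicate, List.length_sublistsLen]
      simp [ncE_zero]
    · -- j = j' + 1
      have hidx : j + 1 + d = (j + d) + 1 := by omega
      rw [hidx, List.sublistsLen_succ_cons, List.map_append, List.sum_append, List.map_map]
      have hcons : ((List.sublistsLen (j + d) L).map (ncE (j + 1) ∘ (x :: ·))).sum
          = ((List.sublistsLen (j + d) L).map (ncE (j + 1))).sum
            + ((List.sublistsLen (j + d) L).map (ncE j)).sum * x := by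
        rw [← List.sum_map_mul_right, ← List.sum_map_add]
        exact congrArg List.sum (List.map_congr_left fun T _ => ncE_succ_cons j x T)
      rw [hcons]
      have h1 : ((List.sublistsLen ((j + 1) + d) L).map (ncE (j + 1))).sum
          = ((L.length - (j + 1)).choose d) • ncE (j + 1) L := ih (j + 1) d
      have h3 : ((List.sublistsLen (j + d) L).map (ncE j)).sum
          = ((L.length - j).choose d) • ncE j L := ih j d
      have hidx2 : j + d = (j + 1) + d - 1 := by omega
      -- middle term
      have h2 : ((List.sublistsLen (j + d) L).map (ncE (j + 1))).sum
          = (if d = 0 then 0 else ((L.length - (j + 1)).choose (d - 1)) • ncE (j + 1) L) := by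
        rcases d with _ | d
        · simp only [if_pos rfl]
          apply List.sum_eq_zero
          intro y hy
          rcases List.mem_map.1 hy with ⟨T, hT, rfl⟩
          have := (List.mem_sublistsLen.1 hT).2
          exact ncE_eq_zero _ _ (by omega)
        · have : j + (d + 1) = (j + 1) + d := by omega
          rw [this, ih (j + 1) d]
          simp
      rw [hidx] at h1
      rw [h1, h2, h3, ncE_succ_cons]
      have hlen : (x :: L).length - (j + 1) = L.length - j := by simp
      rw [hlen]
      by_cases hjn : L.length ≤ j
      · -- ncE (j+1) L = 0
        have hz : ncE (j + 1) L = 0 := ncE_eq_zero _ _ (by omega)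
        rcases d with _ | d <;>
          simp [hz, smul_add, smul_mul_assoc, mul_assoc]
      · push_neg at hjn
        have hsub : L.length - j = (L.length - (j + 1)) + 1 := by omega
        rcases d with _ | d
        · simp [smul_add, smul_mul_assoc]
        · rw [if_neg (by omega)]
          have : d + 1 - 1 = d := rfl
          rw [this, hsub, Nat.choose_succ_succ]
          simp only [add_smul, smul_add, add_mul, smul_mul_assoc, Nat.succ_eq_add_one]
          abel

/-- peeling off the block of `l` copies of `x` at the front. -/
theorem ncE_replicate_append (x : R) :
    ∀ (l m : ℕ) (L : List R),
      ncE m (List.replicate l x ++ L)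
        = ∑ k ∈ Finset.range (m + 1), (l.choose k) • (ncE (m - k) L * x ^ k) := by
  intro l
  induction l with
  | zero =>
    intro m L
    rw [Finset.sum_eq_single 0]
    · simp
    · intro k _ hk
      rcases k with _ | k
      · exact absurd rfl hk
      · simp
    · intro h; exact absurd (Finset.mem_range.2 (by omega)) h
  | succ l ih =>
    intro m L
    rcases m with _ | m
    · simp [ncE_zero]
    · have hrep : List.replicate (l + 1) x ++ L = x :: (List.replicate l x ++ L) := by
        simp [List.replicate_succ]
      rw [hrep, ncE_succ_cons, ih (m + 1) L, ih m L]
      have hmul : (∑ k ∈ Finset.range (m + 1), (l.choose k) • (ncE (m - k) L * x ^ k)) * x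
          = ∑ k ∈ Finset.range (m + 1), (l.choose k) • (ncE (m + 1 - (k + 1)) L * x ^ (k + 1)) := by
        rw [Finset.sum_mul]
        apply Finset.sum_congr rfl
        intro k _
        rw [Nat.succ_sub_succ, smul_mul_assoc, mul_assoc, ← pow_succ]
      rw [hmul]
      rw [Finset.sum_range_succ' (fun k => (l.choose k) • (ncE (m + 1 - k) L * x ^ k)) (m + 1),
        Finset.sum_range_succ' (fun k => ((l + 1).choose k) • (ncE (m + 1 - k) L * x ^ k)) (m + 1)]
      rw [add_right_comm, ← Finset.sum_add_distrib]
      congr 1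
      · apply Finset.sum_congr rfl
        intro k _
        rw [← add_smul]
        congr 1
        rw [Nat.choose_succ_succ, Nat.add_comm]
      · simp

/-- bridge between sums over `powersetCard` and sums over `sublistsLen`. -/
theorem bridge {N : ℕ} (c : ℕ) (X : Fin N → R) (f : List R → R) :
    ∑ S ∈ (Finset.univ : Finset (Fin N)).powersetCard c,
        f ((S.sort (· ≤ ·)).map X)
      = ((List.sublistsLen c (List.ofFn X)).map f).sum := by
  have hofn : List.ofFn X = (List.finRange N).map X := List.ofFn_eq_map
  have hfr_sorted : (List.finRange N).Pairwise (· ≤ ·) := by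
    rw [← Fin.sort_univ]
    exact Finset.pairwise_sort _ _
  have hfr_nodup : (List.finRange N).Nodup := List.nodup_finRange N
  rw [hofn, sublistsLen_map_map, List.map_map,
    ← List.sum_toFinset _ (List.nodup_sublistsLen c hfr_nodup)]
  refine Finset.sum_nbij' (i := fun S => S.sort (· ≤ ·)) (j := fun T => T.toFinset)
    ?_ ?_ ?_ ?_ ?_
  · intro S hS
    rw [List.mem_toFinset, List.mem_sublistsLen]
    constructor
    · apply List.sublist_of_subperm_of_pairwise _ (Finset.pairwise_sort _ _) hfr_sorted
      exact (Finset.sort_nodup _ _).subperm (fun a _ => List.mem_finRange a)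
    · rw [Finset.length_sort]
      exact (Finset.mem_powersetCard.1 hS).2
  · intro T hT
    rw [List.mem_toFinset, List.mem_sublistsLen] at hT
    rw [Finset.mem_powersetCard]
    refine ⟨Finset.subset_univ _, ?_⟩
    rw [List.card_toFinset, (hT.1.nodup hfr_nodup).dedup, hT.2]
  · intro S _
    exact Finset.sort_toFinset _ _
  · intro T hT
    rw [List.mem_toFinset, List.mem_sublistsLen] at hT
    have hnd : T.Nodup := hT.1.nodup hfr_nodup
    have hperm : List.Perm (T.toFinset.sort (· ≤ ·)) T := by
      rw [← Multiset.coe_eq_coe, Finset.sort_eq, List.toFinset_val,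
        List.dedup_eq_self.2 hnd]
    exact List.Perm.eq_of_pairwise' (Finset.pairwise_sort _ _) (hfr_sorted.sublist hT.1) hperm
  · intro S _
    simp

end Aux

/-- The counting identity from the proof of Lemma 3.4: for `l ≤ N`, `1 ≤ m ≤ N`,
`∑_{S ⊆ {1,…,N}, |S| = N-l} e_m(X_0,…,X_0 (l copies), X_{i_1}, …, X_{i_{N-l}})
  = ∑_{k=0}^{min(l,m)} C(l,k) C(N-m+k,l) e_{m-k}(X_1,…,X_N) X_0^k`. -/
theorem stmt3 {R : Type*} [Ring R] (N : ℕ) (X₀ : R) (X : Fin N → R) (l m : ℕ)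
    (hl : l ≤ N) (hm1 : 1 ≤ m) (hm : m ≤ N) :
    ∑ S ∈ (Finset.univ : Finset (Fin N)).powersetCard (N - l),
        ncE m (List.replicate l X₀ ++ (S.sort (· ≤ ·)).map X)
      = ∑ k ∈ Finset.range (min l m + 1),
          (Nat.choose l k * Nat.choose (N - m + k) l) •
            (ncE (m - k) (List.ofFn X) * X₀ ^ k) := by
  have step1 : ∀ S ∈ (Finset.univ : Finset (Fin N)).powersetCard (N - l),
      ncE m (List.replicate l X₀ ++ (S.sort (· ≤ ·)).map X)
        = ∑ k ∈ Finset.range (m + 1),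
            (l.choose k) • (ncE (m - k) ((S.sort (· ≤ ·)).map X) * X₀ ^ k) :=
    fun S _ => ncE_replicate_append X₀ l m _
  rw [Finset.sum_congr rfl step1, Finset.sum_comm]
  have step2 : ∀ k ∈ Finset.range (m + 1),
      (∑ S ∈ (Finset.univ : Finset (Fin N)).powersetCard (N - l),
        (l.choose k) • (ncE (m - k) ((S.sort (· ≤ ·)).map X) * X₀ ^ k))
      = (l.choose k * (N - m + k).choose l) • (ncE (m - k) (List.ofFn X) * X₀ ^ k) := by
    intro k hk
    rw [Finset.mem_range] at hk
    have hkm : k ≤ m := by omega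
    rw [← Finset.smul_sum, ← Finset.sum_mul]
    by_cases hc : m - k ≤ N - l
    · have hd : N - l = (m - k) + ((N - l) - (m - k)) := by omega
      rw [bridge (N - l) X (ncE (m - k)), hd,
        key_s3 (List.ofFn X) (m - k) ((N - l) - (m - k)), List.length_ofFn]
      have h1 : N - (m - k) = N - m + k := by omega
      have h2 : (N - l) - (m - k) = (N - m + k) - l := by omega
      rw [h1, h2, Nat.choose_symm (by omega : l ≤ N - m + k)]
      rw [smul_mul_assoc, smul_smul]
    · have hz : (∑ S ∈ (Finset.univ : Finset (Fin N)).powersetCard (N - l),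
          ncE (m - k) ((S.sort (· ≤ ·)).map X)) = 0 := by
        apply Finset.sum_eq_zero
        intro S hS
        apply ncE_eq_zero
        rw [List.length_map, Finset.length_sort, (Finset.mem_powersetCard.1 hS).2]
        omega
      rw [hz, zero_mul, smul_zero,
        Nat.choose_eq_zero_of_lt (by omega : N - m + k < l), Nat.mul_zero, zero_smul]
  rw [Finset.sum_congr rfl step2]
  symm
  apply Finset.sum_subset
  · intro k hk
    rw [Finset.mem_range] at *
    omega
  · intro k hk hk'
    rw [Finset.mem_range] at hk hk'
    have hlk : l < k := by omega
    rw [Nat.choose_eq_zero_of_lt hlk, zero_mul, zero_smul]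
end
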